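/- Constituents dominate the eigencode: Let C ⊆ F_q^{mℓ} be a λ-QT code with associated upper-triangular matrix G̃(x) and nonempty eigenvalue set Ω̄ ⊆ Ω. Let V_{Ω̄} = ∩_{β∈Ω̄} V_β and let ℂ_{Ω̄} = ℂ(V_{Ω̄}) be the corresponding eigencode. For every i such that β_i is an eigenvalue of C, letting C̄_i ⊆ F^ℓ be the F-span of the rows of G̃(β_i) and C_i = { c(β_i) : c ∈ C } the i-th constituent, one has d(C_i) ≥ d(C̄_i) ≥ d(V_{Ω̄}^⊥) = d(V_{Ω̄}^⊥ ∩ F_q^ℓ) = d(ℂ_{Ω̄}), where V_{Ω̄}^⊥ ⊆ F^ℓ is the dual of V_{Ω̄} under the standard bilinear form. -/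

import Mathlib

open Polynomial

open scoped Classical in
/-- Hamming weight: the number of nonzero coordinates. -/
noncomputable def wt {ι K : Type*} [Fintype ι] [Zero K] (c : ι → K) : ℕ :=
  (Finset.univ.filter fun i => c i ≠ 0).card

/-- Minimum Hamming weight of a nonzero codeword of `S`, with `⊤` for the zero code. -/
noncomputable def minDist {ι K : Type*} [Fintype ι] [Zero K] (S : Set (ι → K)) : ℕ∞ :=
  sInf {n : ℕ∞ | ∃ c ∈ S, c ≠ 0 ∧ (wt c : ℕ∞) = n}

/-- The λ-constashift by ℓ positions on m×ℓ arrays: row 0 becomes λ times old last row. -/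
def rho {Fq : Type*} [Field Fq] (m ℓ : ℕ) [NeZero m] (lam : Fq)
    (c : ZMod m × Fin ℓ → Fq) : ZMod m × Fin ℓ → Fq :=
  fun p => (if p.1 = 0 then lam else 1) * c (p.1 - 1, p.2)

/-- Reduction of a vector of polynomials mod `X^m - λ`, written as an m×ℓ array. -/
noncomputable def arrOf {Fq : Type*} [Field Fq] (m ℓ : ℕ) [NeZero m] (lam : Fq)
    (v : Fin ℓ → Polynomial Fq) : ZMod m × Fin ℓ → Fq :=
  fun p => ((v p.2) %ₘ (Polynomial.X ^ m - Polynomial.C lam)).coeff (p.1).val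

/-- The eigenspace of `β` for the polynomial matrix `G`: the null space of `G(β)`. -/
def Vspace {Fq F : Type*} [Field Fq] [Field F] [Algebra Fq F] (ℓ : ℕ)
    (G : Matrix (Fin ℓ) (Fin ℓ) (Polynomial Fq)) (β : F) : Set (Fin ℓ → F) :=
  {v | (G.map fun p => Polynomial.aeval β p).mulVec v = 0}

/-- The eigencode of a set of vectors `V ⊆ F^ℓ`. -/
def eigencode {Fq F : Type*} [Field Fq] [Field F] [Algebra Fq F] (ℓ : ℕ)
    (V : Set (Fin ℓ → F)) : Set (Fin ℓ → Fq) :=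
  {u | ∀ v ∈ V, ∑ j, v j * algebraMap Fq F (u j) = 0}

lemma minDist_le_of_subset {ι K : Type*} [Fintype ι] [Zero K] {S T : Set (ι → K)}
    (h : S ⊆ T) : minDist T ≤ minDist S :=
  sInf_le_sInf (by rintro n ⟨c, hc, h0, rfl⟩; exact ⟨c, h hc, h0, rfl⟩)

lemma wt_comp_injective {ι K K' : Type*} [Fintype ι] [Zero K] [Zero K']
    (f : K → K') (hf : ∀ a, f a = 0 ↔ a = 0) (c : ι → K) :
    wt (fun i => f (c i)) = wt c := by
  classical
  unfold wt
  congr 1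
  apply Finset.filter_congr
  intro i _
  simp [hf]

lemma wt_le_of_support_subset {ι K K' : Type*} [Fintype ι] [Zero K] [Zero K']
    {c : ι → K} {d : ι → K'} (h : ∀ i, c i = 0 → d i = 0) : wt d ≤ wt c := by
  classical
  unfold wt
  apply Finset.card_le_card
  intro i hi
  simp only [Finset.mem_filter, Finset.mem_univ, true_and] at *
  exact fun h0 => hi (h i h0)

theorem constituents_dominate_eigencode
    {Fq F : Type*} [Field Fq] [Fintype Fq] [Field F] [Algebra Fq F]
    (m ℓ : ℕ) [NeZero m] (hcop : Nat.Coprime m (Fintype.card Fq))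
    (lam : Fq) (hlam : lam ≠ 0)
    (hsplit : IsSplittingField Fq F (X ^ m - C lam))
    (𝓒 : Submodule Fq (ZMod m × Fin ℓ → Fq))
    (hQT : ∀ c ∈ 𝓒, rho m ℓ lam c ∈ 𝓒)
    (G : Matrix (Fin ℓ) (Fin ℓ) (Polynomial Fq))
    (htri : ∀ i j, j < i → G i j = 0)
    (hdiv : ∀ j, G j j ∣ X ^ m - C lam)
    (hGen : ∀ v : Fin ℓ → Polynomial Fq,
      arrOf m ℓ lam v ∈ 𝓒 ↔ v ∈ Submodule.span (Polynomial Fq) (Set.range fun i j => G i j))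
    (s : ℕ) (f : Fin s → Polynomial Fq)
    (hmon : ∀ i, (f i).Monic) (hirr : ∀ i, Irreducible (f i))
    (hfinj : Function.Injective f)
    (hprod : ∏ i, f i = X ^ m - C lam)
    (βc : Fin s → F) (hβc : ∀ i, Polynomial.aeval (βc i) (f i) = 0)
    (Ωbar : Set F)
    (hΩbar : Ωbar = {x : F | x ^ m = algebraMap Fq F lam ∧ Polynomial.aeval x G.det = 0})
    (hne : Ωbar.Nonempty)
    (VΩ : Set (Fin ℓ → F)) (hVΩ : VΩ = ⋂ β ∈ Ωbar, Vspace ℓ G β)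
    (dualV : Set (Fin ℓ → F)) (hdual : dualV = {v | ∀ w ∈ VΩ, ∑ j, w j * v j = 0})
    (i : Fin s) (hi : βc i ∈ Ωbar)
    (Cbar : Set (Fin ℓ → F))
    (hCbar : Cbar =
      ↑(Submodule.span F (Set.range fun a => (G.map fun p => Polynomial.aeval (βc i) p) a)))
    (Ci : Set (Fin ℓ → F))
    (hCi : Ci = {w | ∃ c ∈ 𝓒, w = fun j => ∑ k : ZMod m, algebraMap Fq F (c (k, j)) * βc i ^ k.val}) :
    minDist Cbar ≤ minDist Ci ∧
    minDist dualV ≤ minDist Cbar ∧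
    minDist dualV = minDist {u : Fin ℓ → Fq | (fun j => algebraMap Fq F (u j)) ∈ dualV} ∧
    minDist {u : Fin ℓ → Fq | (fun j => algebraMap Fq F (u j)) ∈ dualV} =
      minDist (eigencode (Fq := Fq) ℓ VΩ) := by
  classical
  set β := βc i with hβ
  haveI : FiniteDimensional Fq F := IsSplittingField.finiteDimensional F (X ^ m - C lam)
  haveI : Finite F := Module.finite_of_finite Fq
  have hm0 : m ≠ 0 := NeZero.ne m
  -- Part 1 : Ci ⊆ Cbar
  have h1 : Ci ⊆ Cbar := by
    rw [hCi, hCbar]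
    rintro w ⟨c, hc, rfl⟩
    -- the polynomial vector with coefficients c
    set v : Fin ℓ → Polynomial Fq := fun j => ∑ k : ZMod m, C (c (k, j)) * X ^ k.val with hv
    have hdeg : ∀ j, (v j).degree < (m : ℕ) := by
      intro j
      refine lt_of_le_of_lt (degree_sum_le _ _) ?_
      rw [Finset.sup_lt_iff (by exact_mod_cast WithBot.bot_lt_coe (m : ℕ))]
      intro k _
      exact lt_of_le_of_lt (degree_C_mul_X_pow_le _ _)
        (by exact_mod_cast ZMod.val_lt k)
    have harr : arrOf m ℓ lam v = c := by
      funext p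
      unfold arrOf
      rw [(modByMonic_eq_self_iff (monic_X_pow_sub_C lam hm0)).2
        (by rw [degree_X_pow_sub_C (Nat.pos_of_ne_zero hm0)]; exact hdeg p.2)]
      rw [hv, finset_sum_coeff]
      simp only [coeff_C_mul, coeff_X_pow]
      rw [Finset.sum_eq_single p.1]
      · simp
      · intro k _ hk
        rw [if_neg, mul_zero]
        exact fun h => hk (ZMod.val_injective m h.symm)
      · simp
    have hvspan : v ∈ Submodule.span (Polynomial Fq) (Set.range fun i j => G i j) :=
      (hGen v).1 (harr ▸ hc)
    have heval : (fun j => ∑ k : ZMod m, algebraMap Fq F (c (k, j)) * β ^ k.val)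
        = fun j => aeval β (v j) := by
      funext j
      rw [hv]
      rw [map_sum]
      congr 1
      funext k
      rw [map_mul, aeval_C, map_pow, aeval_X]
    rw [heval]
    -- span induction
    refine Submodule.span_induction
      (p := fun v _ => (fun j => aeval β (v j)) ∈
        (Submodule.span F (Set.range fun a => (G.map fun p => aeval β p) a) : Set (Fin ℓ → F)))
      ?_ ?_ ?_ ?_ hvspan
    · rintro _ ⟨a, rfl⟩
      exact Submodule.subset_span ⟨a, rfl⟩
    · show (fun j => aeval β ((0 : Fin ℓ → Polynomial Fq) j)) ∈ _
      have : (fun j => aeval β ((0 : Fin ℓ → Polynomial Fq) j)) = 0 := by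
        funext j; simp
      rw [this]; exact (Submodule.span F _).zero_mem
    · intro x y _ _ hx hy
      show (fun j => aeval β ((x + y) j)) ∈ _
      have : (fun j => aeval β ((x + y) j)) =
          (fun j => aeval β (x j)) + fun j => aeval β (y j) := by
        funext j; simp [Pi.add_apply]
      rw [this]; exact (Submodule.span F _).add_mem hx hy
    · intro p x _ hx
      show (fun j => aeval β ((p • x) j)) ∈ _
      have : (fun j => aeval β ((p • x) j)) = aeval β p • fun j => aeval β (x j) := by
        funext j; simp [Pi.smul_apply, smul_eq_mul]
      rw [this]; exact (Submodule.span F _).smul_mem _ hx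
  -- Part 2 : Cbar ⊆ dualV
  have h2 : Cbar ⊆ dualV := by
    rw [hCbar, hdual]
    intro v hv
    refine Submodule.span_induction
      (p := fun v _ => ∀ w ∈ VΩ, ∑ j, w j * v j = 0) ?_ ?_ ?_ ?_ hv
    · rintro _ ⟨a, rfl⟩ w hw
      have hwV : w ∈ Vspace ℓ G β := by
        rw [hVΩ] at hw
        exact Set.mem_iInter₂.1 hw β hi
      have := congrFun hwV a
      simp only [Matrix.mulVec, dotProduct, Pi.zero_apply] at this
      rw [← this]
      congr 1
      funext j
      rw [mul_comm]
    · intro w _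
      simp
    · intro x y _ _ hx hy w hw
      have : ∑ j, w j * (x + y) j = (∑ j, w j * x j) + ∑ j, w j * y j := by
        rw [← Finset.sum_add_distrib]
        congr 1; funext j; rw [Pi.add_apply, mul_add]
      rw [this, hx w hw, hy w hw, add_zero]
    · intro a x _ hx w hw
      have : ∑ j, w j * (a • x) j = a * ∑ j, w j * x j := by
        rw [Finset.mul_sum]
        congr 1; funext j; rw [Pi.smul_apply, smul_eq_mul]; ring
      rw [this, hx w hw, mul_zero]
  -- Galois stability of VΩ and dualV
  have hΩstab : ∀ σ : F ≃ₐ[Fq] F, ∀ x ∈ Ωbar, σ x ∈ Ωbar := by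
    intro σ x hx
    rw [hΩbar] at hx ⊢
    obtain ⟨hx1, hx2⟩ := hx
    constructor
    · rw [← map_pow, hx1, AlgEquiv.commutes]
    · have : aeval (σ x) G.det = σ (aeval x G.det) := aeval_algHom_apply σ.toAlgHom x G.det
      rw [this, hx2, map_zero]
  have hVstab : ∀ σ : F ≃ₐ[Fq] F, ∀ w ∈ VΩ, (fun j => σ (w j)) ∈ VΩ := by
    intro σ w hw
    rw [hVΩ] at hw ⊢
    rw [Set.mem_iInter₂] at hw ⊢
    intro x hx
    have hx' : σ.symm x ∈ Ωbar := hΩstab σ.symm x hx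
    have hwx := hw (σ.symm x) hx'
    funext a
    have := congrFun hwx a
    simp only [Matrix.mulVec, dotProduct, Pi.zero_apply, Matrix.map_apply] at this ⊢
    have key : ∀ j, aeval x (G a j) = σ (aeval (σ.symm x) (G a j)) := by
      intro j
      have h1 : aeval (σ (σ.symm x)) (G a j) = σ (aeval (σ.symm x) (G a j)) :=
        aeval_algHom_apply σ.toAlgHom (σ.symm x) (G a j)
      rw [AlgEquiv.apply_symm_apply] at h1
      exact h1
    calc ∑ j, aeval x (G a j) * σ (w j)
        = σ (∑ j, aeval (σ.symm x) (G a j) * w j) := by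
          rw [map_sum]
          congr 1; funext j; rw [map_mul, key j]
      _ = 0 := by rw [this, map_zero]
  have hDstab : ∀ σ : F ≃ₐ[Fq] F, ∀ v ∈ dualV, (fun j => σ (v j)) ∈ dualV := by
    intro σ v hv
    rw [hdual] at hv ⊢
    intro w hw
    have hw' : (fun j => σ.symm (w j)) ∈ VΩ := hVstab σ.symm w hw
    calc ∑ j, w j * σ (v j)
        = σ (∑ j, σ.symm (w j) * v j) := by
          rw [map_sum]
          congr 1; funext j; rw [map_mul, AlgEquiv.apply_symm_apply]
      _ = 0 := by rw [hv _ hw', map_zero]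
  -- Part 3
  set P : Set (Fin ℓ → Fq) := {u : Fin ℓ → Fq | (fun j => algebraMap Fq F (u j)) ∈ dualV} with hP
  have hmapzero : ∀ a : Fq, algebraMap Fq F a = 0 ↔ a = 0 := fun a => map_eq_zero (algebraMap Fq F)
  have h3 : minDist dualV = minDist P := by
    apply le_antisymm
    · apply sInf_le_sInf
      rintro n ⟨u, hu, h0, rfl⟩
      refine ⟨fun j => algebraMap Fq F (u j), hu, ?_, ?_⟩
      · intro hcon
        apply h0
        funext j
        have := congrFun hcon j
        exact (hmapzero _).1 this
      · rw [wt_comp_injective (algebraMap Fq F) hmapzero u]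
    · apply le_sInf
      rintro n ⟨v, hv, h0, rfl⟩
      -- descent via trace
      obtain ⟨j0, hj0⟩ : ∃ j0, v j0 ≠ 0 := by
        by_contra h
        push_neg at h
        exact h0 (funext h)
      obtain ⟨e, he⟩ : ∃ e, Algebra.trace Fq F (v j0 * e) ≠ 0 := by
        by_contra h
        push_neg at h
        refine hj0 ((traceForm_nondegenerate Fq F).1 (v j0) fun y => ?_)
        rw [Algebra.traceForm_apply]; exact h y
      set u : Fin ℓ → Fq := fun j => Algebra.trace Fq F (v j * e) with hu
      have huP : u ∈ P := by
        rw [hP]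
        show (fun j => algebraMap Fq F (u j)) ∈ dualV
        rw [hdual]
        intro w hw
        have key : ∀ j, algebraMap Fq F (u j) = ∑ σ : F ≃ₐ[Fq] F, σ (v j) * σ e := by
          intro j
          show algebraMap Fq F (Algebra.trace Fq F (v j * e)) = _
          rw [trace_eq_sum_automorphisms]
          congr 1; funext σ; rw [map_mul]
        calc ∑ j, w j * algebraMap Fq F (u j)
            = ∑ j, ∑ σ : F ≃ₐ[Fq] F, w j * σ (v j) * σ e := by
              congr 1; funext j
              rw [key, Finset.mul_sum]
              congr 1; funext σ; ring
          _ = ∑ σ : F ≃ₐ[Fq] F, (∑ j, w j * σ (v j)) * σ e := by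
              rw [Finset.sum_comm]
              congr 1; funext σ; rw [Finset.sum_mul]
          _ = 0 := by
              apply Finset.sum_eq_zero
              intro σ _
              have hσv : (fun j => σ (v j)) ∈ dualV := hDstab σ v hv
              rw [hdual] at hσv
              rw [hσv w hw, zero_mul]
      have hune : u ≠ 0 := fun hcon => he (congrFun hcon j0)
      have hwt : wt u ≤ wt v := by
        apply wt_le_of_support_subset
        intro j hj
        show Algebra.trace Fq F (v j * e) = 0
        rw [hj, zero_mul, map_zero]
      calc minDist P ≤ (wt u : ℕ∞) := sInf_le ⟨u, huP, hune, rfl⟩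
        _ ≤ (wt v : ℕ∞) := by exact_mod_cast hwt
  -- Part 4
  have h4 : P = eigencode (Fq := Fq) ℓ VΩ := by
    ext u
    rw [hP, hdual]
    simp only [Set.mem_setOf_eq, eigencode]
  exact ⟨minDist_le_of_subset h1, minDist_le_of_subset h2, h3, by rw [h4]⟩
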